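/- Let λ ≠ 0, m ≠ 1 be real constants. The function u(x,t) = (t/x + (λ(m−1)/4)·x)^{−2/(m−1)} satisfies u_t + u^{(m−1)/2}·u_x + λ·u^m = 0 at every point (x,t) with x ≠ 0 at which the base t/x + (λ(m−1)/4)·x is positive. -/

import Mathlib

open Real

/-- the function
`u(x,t) = (t/x + (λ(m−1)/4)·x)^{−2/(m−1)}` satisfies
`u_t + u^{(m−1)/2}·u_x + λ·u^m = 0` at every point with `x ≠ 0` at which the
base `t/x + (λ(m−1)/4)·x` is positive. -/
theorem case4_invariant_solution
    (lam m : ℝ) (hlam : lam ≠ 0) (hm : m ≠ 1) :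
    ∀ u : ℝ × ℝ → ℝ,
      u = (fun p : ℝ × ℝ =>
        (p.2 / p.1 + (lam * (m - 1) / 4) * p.1) ^ (-(2 / (m - 1)))) →
      ∀ x t : ℝ, x ≠ 0 →
        0 < t / x + (lam * (m - 1) / 4) * x →
        fderiv ℝ u (x, t) (0, 1)
          + u (x, t) ^ ((m - 1) / 2) * fderiv ℝ u (x, t) (1, 0)
          + lam * u (x, t) ^ m = 0 := by
  intro u hu x t hx hpos
  subst hu
  have hm1 : m - 1 ≠ 0 := sub_ne_zero.mpr hm
  set c : ℝ := lam * (m - 1) / 4 with hc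
  set e : ℝ := -(2 / (m - 1)) with he
  set G : ℝ := t / x + c * x with hG
  have hGpos : 0 < G := hpos
  have hg0 := (hasFDerivAt_snd.mul ((hasFDerivAt_inv hx).comp ((x, t) : ℝ × ℝ)
      hasFDerivAt_fst)).add ((hasFDerivAt_fst (𝕜 := ℝ) (p := ((x, t) : ℝ × ℝ))).const_mul c)
  simp only [Function.comp_def, Pi.mul_def, Pi.add_def, ← div_eq_mul_inv] at hg0
  have hu' := hg0.rpow_const (p := e) (Or.inl hGpos.ne')
  rw [hu'.fderiv]
  simp only [ContinuousLinearMap.smul_apply, ContinuousLinearMap.add_apply,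
    ContinuousLinearMap.comp_apply, ContinuousLinearMap.smulRight_apply,
    ContinuousLinearMap.coe_fst', ContinuousLinearMap.coe_snd',
    ContinuousLinearMap.one_apply, ContinuousLinearMap.toSpanSingleton_apply, smul_eq_mul]
  have hIdx : e * ((m - 1) / 2) = -1 := by rw [he]; field_simp
  have hIdm : e - 1 = e * m + 1 := by rw [he]; field_simp; ring
  have h1 : (G ^ e) ^ ((m - 1) / 2) = G⁻¹ := by
    rw [← Real.rpow_mul hGpos.le, hIdx, Real.rpow_neg_one]
  have h2 : (G ^ e) ^ m = G ^ (e * m) := (Real.rpow_mul hGpos.le _ _).symm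
  have h3 : G ^ (e - 1) = G ^ (e * m) * G := by
    rw [hIdm, Real.rpow_add hGpos, Real.rpow_one]
  rw [← hG, h1, h2, h3]
  simp only [mul_zero, zero_mul, add_zero, zero_add, mul_one, one_mul, mul_neg]
  generalize G ^ (e * m) = B
  have cancel : ∀ a : ℝ, G⁻¹ * (e * (B * G) * a) = e * B * a := by
    intro a
    field_simp [hGpos.ne']
  rw [cancel]
  rw [hG, he, hc]
  have hGne : t / x + lam * (m - 1) / 4 * x ≠ 0 := by
    rw [← hc, ← hG]; exact hGpos.ne'
  field_simp
  ring
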